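/- Let H = U_q(su₂), σ := K⁻² ∈ H, and let 𝒦 ⊆ H be the Hopf subalgebra generated by K² and K⁻². Let M^p denote the quotient of H^⊗(p+1) by the subspace spanned by all h₍₁₎h⁰⊗…⊗h₍ₚ₊₁₎hᵖ − ε(h)·h⁰⊗…⊗hᵖ (h ∈ H), i.e. M^p = {}^{σ⁻¹}k ⊗_H H^⊗(p+1) for the trivial right H-action on k; write [h⁰⊗…⊗hᵖ] for classes. Define two right operations on M^p: the diagonal 𝒦-action [h⁰⊗…⊗hᵖ]·u := [h⁰u₍₁₎⊗…⊗hᵖu₍ₚ₊₁₎] and the last-factor operation [h⁰⊗…⊗hᵖ]◁u := [h⁰⊗…⊗hᵖu]. Define ∂ᵢ[h⁰⊗…⊗hᵖ] := [h⁰⊗…⊗Δ(hⁱ)⊗…⊗hᵖ] for 0 ≤ i ≤ p, ∂_{p+1}[h⁰⊗…⊗hᵖ] := [h⁰₍₂₎⊗h¹⊗…⊗hᵖ⊗σ⁻¹h⁰₍₁₎], and τ_p[h⁰⊗…⊗hᵖ] := [h¹⊗…⊗hᵖ⊗σ⁻¹h⁰]. Then the element F := [1⊗KF⊗EK³] − [1⊗EK⊗K³F]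 − (q³−q)⁻¹[1⊗1⊗K⁴] of M² satisfies: (i) F·K^{2m} = F for all m ∈ ℤ (𝒦-equivariance); (ii) ∂₀F − ∂₁F + ∂₂F − (∂₃F)◁K² = 0; and (iii) (τ₂F)◁K² = F. Hence F defines an equivariant cyclic 2-cocycle in C²_𝒦(U_q(su₂), {}^σk, {}^{σ⁻¹}k). -/

import Mathlib

/-!
STATEMENT 9: For `H = U_q(su₂)`, `σ = K⁻²`, and the quotient
`M^p = {}^{σ⁻¹}k ⊗_H H^⊗(p+1)` of `H^⊗(p+1)` by the span of all
`h₍₁₎h⁰ ⊗ … ⊗ h₍ₚ₊₁₎hᵖ − ε(h)·h⁰ ⊗ … ⊗ hᵖ`, the element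
`F = [1⊗KF⊗EK³] − [1⊗EK⊗K³F] − (q³−q)⁻¹[1⊗1⊗K⁴]` of `M²` is a `𝒦`-equivariant
cyclic 2-cocycle: (i) `F·K^{2m} = F` for all `m ∈ ℤ`;
(ii) `∂₀F − ∂₁F + ∂₂F − (∂₃F)◁K² = 0`; (iii) `(τ₂F)◁K² = F`.
All of this is expressed on the level of representatives, modulo the relation
subspaces `N₃ ⊆ H^⊗3` and `N₄ ⊆ H^⊗4` defining the quotients.
-/

open TensorProduct Coalgebra HopfAlgebra

section
variable {k H : Type*} [CommRing k] [Ring H] [Bialgebra k H]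

/-- Two-fold comultiplication `h ↦ h₍₁₎ ⊗ h₍₂₎ ⊗ h₍₃₎`. -/
noncomputable def comul2 : H →ₗ[k] (H ⊗[k] H) ⊗[k] H :=
  (LinearMap.rTensor H (comul (R := k))) ∘ₗ comul

/-- Three-fold comultiplication `h ↦ h₍₁₎ ⊗ h₍₂₎ ⊗ h₍₃₎ ⊗ h₍₄₎`. -/
noncomputable def comul3 : H →ₗ[k] ((H ⊗[k] H) ⊗[k] H) ⊗[k] H :=
  (LinearMap.rTensor H (comul2 (k := k))) ∘ₗ comul

/-- The relation subspace: the span of all `Δⁿ(h)·x − ε(h)·x`, so that the quotient is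
`{}^{σ⁻¹}k ⊗_H H^⊗(n+1)` for the trivial right `H`-action on `k`. -/
noncomputable def relSub3 : Submodule k ((H ⊗[k] H) ⊗[k] H) :=
  Submodule.span k
    {y | ∃ (h : H) (x : (H ⊗[k] H) ⊗[k] H), y = comul2 (k := k) h * x - counit (R := k) h • x}

@[reducible] noncomputable def relSub4 : Submodule k (((H ⊗[k] H) ⊗[k] H) ⊗[k] H) :=
  Submodule.span k
    {y | ∃ (h : H) (x : ((H ⊗[k] H) ⊗[k] H) ⊗[k] H),
      y = comul3 (k := k) h * x - counit (R := k) h • x}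

/-- `∂₀ = Δ ⊗ id ⊗ id` on representatives. -/
noncomputable def face0 : (H ⊗[k] H) ⊗[k] H →ₗ[k] ((H ⊗[k] H) ⊗[k] H) ⊗[k] H :=
  LinearMap.rTensor H (LinearMap.rTensor H (comul (R := k)))

/-- `∂₁ = id ⊗ Δ ⊗ id` on representatives. -/
noncomputable def face1 : (H ⊗[k] H) ⊗[k] H →ₗ[k] ((H ⊗[k] H) ⊗[k] H) ⊗[k] H :=
  LinearMap.rTensor H
    ((TensorProduct.assoc k H H H).symm.toLinearMap ∘ₗ LinearMap.lTensor H (comul (R := k)))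

/-- `∂₂ = id ⊗ id ⊗ Δ` on representatives. -/
noncomputable def face2 : (H ⊗[k] H) ⊗[k] H →ₗ[k] ((H ⊗[k] H) ⊗[k] H) ⊗[k] H :=
  (TensorProduct.assoc k (H ⊗[k] H) H H).symm.toLinearMap ∘ₗ
    LinearMap.lTensor (H ⊗[k] H) (comul (R := k))

/-- `∂₃([h⁰⊗h¹⊗h²]) = [h⁰₍₂₎⊗h¹⊗h²⊗(σ⁻¹h⁰₍₁₎)]` on representatives; `σinv` is `σ⁻¹ = K²`. -/
noncomputable def face3 (σinv : H) :
    (H ⊗[k] H) ⊗[k] H →ₗ[k] ((H ⊗[k] H) ⊗[k] H) ⊗[k] H :=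
  (LinearMap.lTensor ((H ⊗[k] H) ⊗[k] H) (LinearMap.mulLeft k σinv)) ∘ₗ
    (TensorProduct.comm k H ((H ⊗[k] H) ⊗[k] H)).toLinearMap ∘ₗ
    (LinearMap.lTensor H (TensorProduct.assoc k H H H).symm.toLinearMap) ∘ₗ
    (TensorProduct.assoc k H H (H ⊗[k] H)).toLinearMap ∘ₗ
    (TensorProduct.assoc k (H ⊗[k] H) H H).toLinearMap ∘ₗ
    LinearMap.rTensor H (LinearMap.rTensor H (comul (R := k)))

/-- `τ₂([h⁰⊗h¹⊗h²]) = [h¹⊗h²⊗(σ⁻¹h⁰)]` on representatives; `σinv` is `σ⁻¹ = K²`. -/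
noncomputable def cyc2 (σinv : H) :
    (H ⊗[k] H) ⊗[k] H →ₗ[k] (H ⊗[k] H) ⊗[k] H :=
  (LinearMap.lTensor (H ⊗[k] H) (LinearMap.mulLeft k σinv)) ∘ₗ
    (TensorProduct.comm k H (H ⊗[k] H)).toLinearMap ∘ₗ
    (TensorProduct.assoc k H H H).toLinearMap

end

set_option maxHeartbeats 1600000 in
theorem stmt9_equivariant_index_cocycle_for_Uq_su2
    (k : Type*) [Field k] [CharZero k] (q : k) (hq : q ≠ 0) (hq2 : q ^ 2 ≠ 1)
    -- the Hopf algebra `H = U_q(su₂)`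
    (H : Type*) [Ring H] [HopfAlgebra k H]
    (E F K K' : H)
    (hKK' : K * K' = 1) (hK'K : K' * K = 1)
    (hKE : K * E = q • (E * K))
    (hFK : F * K = q • (K * F))
    (hEF : E * F - F * E = (q - q⁻¹)⁻¹ • (K * K - K' * K'))
    (hΔK : comul (R := k) K = K ⊗ₜ[k] K)
    (hΔK' : comul (R := k) K' = K' ⊗ₜ[k] K')
    (hΔE : comul (R := k) E = E ⊗ₜ[k] K + K' ⊗ₜ[k] E)
    (hΔF : comul (R := k) F = F ⊗ₜ[k] K + K' ⊗ₜ[k] F)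
    (hεK : counit (R := k) K = 1) (hεK' : counit (R := k) K' = 1)
    (hεE : counit (R := k) E = 0) (hεF : counit (R := k) F = 0)
    (hSK : antipode (R := k) K = K') (hSK' : antipode (R := k) K' = K)
    (hSE : antipode (R := k) E = -(q • E)) (hSF : antipode (R := k) F = -(q⁻¹ • F)) :
    -- the representative of
    -- `F = [1⊗KF⊗EK³] − [1⊗EK⊗K³F] − (q³−q)⁻¹[1⊗1⊗K⁴] ∈ M²`
    (let Frep : (H ⊗[k] H) ⊗[k] H :=
       (1 ⊗ₜ[k] (K * F)) ⊗ₜ[k] (E * (K * K * K))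
         - (1 ⊗ₜ[k] (E * K)) ⊗ₜ[k] ((K * K * K) * F)
         - (q ^ 3 - q)⁻¹ • ((1 ⊗ₜ[k] (1 : H)) ⊗ₜ[k] (K * K * K * K));
     -- (i)  `F · K^{2m} = F` in `M²` for every `m ∈ ℤ` (`𝒦`-equivariance)
     (∀ m : ℕ,
        Frep * comul2 (K ^ (2 * m)) - Frep ∈ relSub3 (k := k) (H := H) ∧
        Frep * comul2 (K' ^ (2 * m)) - Frep ∈ relSub3 (k := k) (H := H)) ∧
     -- (ii)  `∂₀F − ∂₁F + ∂₂F − (∂₃F) ◁ K² = 0` in `M³`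
     (face0 Frep - face1 Frep + face2 Frep
         - (LinearMap.lTensor ((H ⊗[k] H) ⊗[k] H) (LinearMap.mulRight k (K * K)))
             (face3 (K * K) Frep)
       ∈ relSub4 (k := k) (H := H)) ∧
     -- (iii)  `(τ₂ F) ◁ K² = F` in `M²`
     ((LinearMap.lTensor (H ⊗[k] H) (LinearMap.mulRight k (K * K)))
         (cyc2 (K * K) Frep) - Frep
       ∈ relSub3 (k := k) (H := H))) := by
  have hiq : q⁻¹ * q = 1 := inv_mul_cancel₀ hq
  have rKK' : ∀ x : H, K * (K' * x) = x := fun x => by rw [← mul_assoc, hKK', one_mul]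
  have rK'K : ∀ x : H, K' * (K * x) = x := fun x => by rw [← mul_assoc, hK'K, one_mul]
  have rKE : ∀ x : H, K * (E * x) = q • (E * (K * x)) := fun x => by
    rw [← mul_assoc, hKE, smul_mul_assoc, mul_assoc]
  have rKF0 : K * F = q⁻¹ • (F * K) := by rw [hFK, smul_smul, hiq, one_smul]
  have rKF : ∀ x : H, K * (F * x) = q⁻¹ • (F * (K * x)) := fun x => by
    rw [← mul_assoc, rKF0, smul_mul_assoc, mul_assoc]
  have hEK' : ∀ x : H, E * (K' * x) = q • (K' * (E * x)) := fun x => by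
    conv_lhs => rw [← rK'K (E * (K' * x)), rKE, rKK', mul_smul_comm]
  have rK'E : ∀ x : H, K' * (E * x) = q⁻¹ • (E * (K' * x)) := fun x => by
    rw [hEK', smul_smul, hiq, one_smul]
  have hFK' : ∀ x : H, F * (K' * x) = q⁻¹ • (K' * (F * x)) := fun x => by
    conv_lhs => rw [← rK'K (F * (K' * x)), rKF, rKK', mul_smul_comm]
  have rK'F : ∀ x : H, K' * (F * x) = q • (F * (K' * x)) := fun x => by
    rw [hFK', smul_smul, mul_inv_cancel₀ hq, one_smul]
  have rK'E0 : K' * E = q⁻¹ • (E * K') := by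
    have := rK'E 1; rwa [mul_one, mul_one] at this
  have rK'F0 : K' * F = q • (F * K') := by
    have := rK'F 1; rwa [mul_one, mul_one] at this
  have rFE : ∀ x : H, F * (E * x)
      = E * (F * x) - (q - q⁻¹)⁻¹ • (K * (K * x) - K' * (K' * x)) := fun x => by
    have h := congrArg (· * x) hEF
    simp only [sub_mul, smul_mul_assoc, mul_assoc] at h
    rw [← h]; abel
  have rFE0 : F * E = E * F - (q - q⁻¹)⁻¹ • (K * K - K' * K') := by
    have := rFE 1; rwa [mul_one, mul_one, mul_one, mul_one] at this
  have hqd : q - q⁻¹ ≠ 0 := by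
    intro h
    apply hq2
    have h2 : q = q⁻¹ := sub_eq_zero.mp h
    rw [pow_two]
    nth_rewrite 2 [h2]
    exact mul_inv_cancel₀ hq
  intro Frep
  refine ⟨?_, ?_, ?_⟩
  · -- part (i)
    intro m
    constructor
    · -- K case
      have hε1 : counit (R := k) (K ^ (2 * m)) = 1 := by
        rw [Bialgebra.counit_pow, hεK, one_pow]
      have hca : comul2 (k := k) (K ^ (2 * m))
          = ((K ^ (2 * m)) ⊗ₜ[k] (K ^ (2 * m))) ⊗ₜ[k] (K ^ (2 * m)) := by
        simp [comul2, Bialgebra.comul_pow, hΔK, Algebra.TensorProduct.tmul_pow]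
      have hG : ((K ^ (2 * m)) ⊗ₜ[k] (K ^ (2 * m))) ⊗ₜ[k] (K ^ (2 * m))
          = (((K * K) ⊗ₜ[k] (K * K)) ⊗ₜ[k] (K * K)) ^ m := by
        simp [Algebra.TensorProduct.tmul_pow, pow_mul, pow_two]
      have cbase : Commute Frep (((K * K) ⊗ₜ[k] (K * K)) ⊗ₜ[k] (K * K)) := by
        unfold Frep
        show _ * _ = _ * _
        simp only [Algebra.TensorProduct.tmul_mul_tmul,
          tmul_add, add_tmul, tmul_sub, sub_tmul, ← TensorProduct.smul_tmul', tmul_smul,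
          mul_add, add_mul, mul_sub, sub_mul,
          one_mul, mul_one, mul_assoc, smul_mul_assoc, mul_smul_comm, smul_smul,
          smul_sub, smul_add, hKK', hK'K,
          rKE, rKF, rK'E, rK'F, rKK', rK'K, rFE, hKE, rKF0, rK'E0, rK'F0, rFE0]
        match_scalars <;> field_simp
      have heq : Frep * comul2 (K ^ (2 * m)) - Frep
          = comul2 (k := k) (K ^ (2 * m)) * Frep - counit (R := k) (K ^ (2 * m)) • Frep := by
        rw [hε1, one_smul, hca, hG, (cbase.pow_right m).eq]
      rw [heq]
      exact Submodule.subset_span ⟨K ^ (2 * m), Frep, rfl⟩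
    · -- K' case
      have hε1 : counit (R := k) (K' ^ (2 * m)) = 1 := by
        rw [Bialgebra.counit_pow, hεK', one_pow]
      have hca : comul2 (k := k) (K' ^ (2 * m))
          = ((K' ^ (2 * m)) ⊗ₜ[k] (K' ^ (2 * m))) ⊗ₜ[k] (K' ^ (2 * m)) := by
        simp [comul2, Bialgebra.comul_pow, hΔK', Algebra.TensorProduct.tmul_pow]
      have hG : ((K' ^ (2 * m)) ⊗ₜ[k] (K' ^ (2 * m))) ⊗ₜ[k] (K' ^ (2 * m))
          = (((K' * K') ⊗ₜ[k] (K' * K')) ⊗ₜ[k] (K' * K')) ^ m := by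
        simp [Algebra.TensorProduct.tmul_pow, pow_mul, pow_two]
      have cbase : Commute Frep (((K' * K') ⊗ₜ[k] (K' * K')) ⊗ₜ[k] (K' * K')) := by
        unfold Frep
        show _ * _ = _ * _
        simp only [Algebra.TensorProduct.tmul_mul_tmul,
          tmul_add, add_tmul, tmul_sub, sub_tmul, ← TensorProduct.smul_tmul', tmul_smul,
          mul_add, add_mul, mul_sub, sub_mul,
          one_mul, mul_one, mul_assoc, smul_mul_assoc, mul_smul_comm, smul_smul,
          smul_sub, smul_add, hKK', hK'K,
          rKE, rKF, rK'E, rK'F, rKK', rK'K, rFE, hKE, rKF0, rK'E0, rK'F0, rFE0]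
        match_scalars <;> field_simp
      have heq : Frep * comul2 (K' ^ (2 * m)) - Frep
          = comul2 (k := k) (K' ^ (2 * m)) * Frep - counit (R := k) (K' ^ (2 * m)) • Frep := by
        rw [hε1, one_smul, hca, hG, (cbase.pow_right m).eq]
      rw [heq]
      exact Submodule.subset_span ⟨K' ^ (2 * m), Frep, rfl⟩
  · -- part (ii)
    have key : (face0 Frep - face1 Frep + face2 Frep
           - (LinearMap.lTensor ((H ⊗[k] H) ⊗[k] H) (LinearMap.mulRight k (K * K)))
               (face3 (K * K) Frep)) = 0 := by
      unfold Frep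
      simp only [face0, face1, face2, face3, map_sub, map_smul, map_add,
        LinearMap.coe_comp, Function.comp_apply, LinearEquiv.coe_coe,
        LinearMap.rTensor_tmul, LinearMap.lTensor_tmul,
        TensorProduct.assoc_tmul, TensorProduct.assoc_symm_tmul, TensorProduct.comm_tmul,
        LinearMap.mulLeft_apply, LinearMap.mulRight_apply,
        Bialgebra.comul_mul, Bialgebra.comul_one, hΔK, hΔK', hΔE, hΔF,
        Algebra.TensorProduct.tmul_mul_tmul, Algebra.TensorProduct.one_def,
        tmul_add, add_tmul, tmul_sub, sub_tmul, ← TensorProduct.smul_tmul', tmul_smul,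
        mul_add, add_mul, mul_sub, sub_mul,
        one_mul, mul_one, mul_assoc, smul_mul_assoc, mul_smul_comm, smul_smul,
        smul_sub, smul_add, hKK', hK'K,
        rKE, rKF, rK'E, rK'F, rKK', rK'K, rFE, hKE, rKF0, rK'E0, rK'F0, rFE0]
      match_scalars <;> field_simp <;> ring
    rw [key]
    exact Submodule.zero_mem _
  · -- part (iii)
    have mem1 : comul2 (k := k) (K * F) * (((1 : H) ⊗ₜ[k] (E * K)) ⊗ₜ[k] (K * K))
        - counit (R := k) (K * F) • (((1 : H) ⊗ₜ[k] (E * K)) ⊗ₜ[k] (K * K))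
        ∈ relSub3 (k := k) (H := H) :=
      Submodule.subset_span ⟨K * F, _, rfl⟩
    have mem2 : comul2 (k := k) (E * K) * (((1 : H) ⊗ₜ[k] (K * F)) ⊗ₜ[k] (K * K))
        - counit (R := k) (E * K) • (((1 : H) ⊗ₜ[k] (K * F)) ⊗ₜ[k] (K * K))
        ∈ relSub3 (k := k) (H := H) :=
      Submodule.subset_span ⟨E * K, _, rfl⟩
    have key : (LinearMap.lTensor (H ⊗[k] H) (LinearMap.mulRight k (K * K)))
         (cyc2 (K * K) Frep) - Frep
        = (q⁻¹ * q⁻¹) • (comul2 (k := k) (K * F) * (((1 : H) ⊗ₜ[k] (E * K)) ⊗ₜ[k] (K * K))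
            - counit (R := k) (K * F) • (((1 : H) ⊗ₜ[k] (E * K)) ⊗ₜ[k] (K * K)))
          - (comul2 (k := k) (E * K) * (((1 : H) ⊗ₜ[k] (K * F)) ⊗ₜ[k] (K * K))
            - counit (R := k) (E * K) • (((1 : H) ⊗ₜ[k] (K * F)) ⊗ₜ[k] (K * K))) := by
      unfold Frep
      simp only [cyc2, comul2, map_sub, map_smul, map_add,
        LinearMap.coe_comp, Function.comp_apply, LinearEquiv.coe_coe,
        LinearMap.rTensor_tmul, LinearMap.lTensor_tmul,
        TensorProduct.assoc_tmul, TensorProduct.assoc_symm_tmul, TensorProduct.comm_tmul,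
        LinearMap.mulLeft_apply, LinearMap.mulRight_apply,
        Bialgebra.comul_mul, Bialgebra.comul_one, Bialgebra.counit_mul, Bialgebra.counit_one,
        hΔK, hΔK', hΔE, hΔF, hεK, hεK', hεE, hεF,
        Algebra.TensorProduct.tmul_mul_tmul, Algebra.TensorProduct.one_def,
        tmul_add, add_tmul, tmul_sub, sub_tmul, ← TensorProduct.smul_tmul', tmul_smul,
        mul_add, add_mul, mul_sub, sub_mul, zero_smul, smul_zero, sub_zero, zero_mul, mul_zero,
        one_mul, mul_one, mul_assoc, smul_mul_assoc, mul_smul_comm, smul_smul,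
        smul_sub, smul_add, hKK', hK'K,
        rKE, rKF, rK'E, rK'F, rKK', rK'K, rFE, hKE, rKF0, rK'E0, rK'F0, rFE0]
      match_scalars <;> field_simp <;> ring
    rw [key]
    exact sub_mem (Submodule.smul_mem _ _ mem1) mem2
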